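/- Every nonempty totally disconnected, perfect, compact, metrizable topological space is homeomorphic to the Cantor set. -/

import Mathlib

open Set Function Filter Topology CantorScheme PiNat
open scoped ENNReal

namespace Stmt2Aux

variable {X : Type*}

/-- Union of a list of sets. -/
def ul (L : List (Set X)) : Set X := ⋃ B ∈ L, B

@[simp] lemma ul_nil : ul ([] : List (Set X)) = ∅ := by simp [ul]

@[simp] lemma ul_cons (A : Set X) (t : List (Set X)) : ul (A :: t) = A ∪ ul t := by
  simp [ul]

lemma mem_ul {x : X} {L : List (Set X)} : x ∈ ul L ↔ ∃ B ∈ L, x ∈ B := by simp [ul]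

lemma subset_ul {B : Set X} {L : List (Set X)} (hB : B ∈ L) : B ⊆ ul L :=
  fun x hx => mem_ul.mpr ⟨B, hB, hx⟩

lemma disjoint_ul {A : Set X} {L : List (Set X)} (h : ∀ C ∈ L, Disjoint A C) :
    Disjoint A (ul L) := by
  simp only [ul, Set.disjoint_iUnion_right]
  exact h

lemma isClosed_ul [TopologicalSpace X] {L : List (Set X)}
    (h : ∀ B ∈ L, IsClosed B) : IsClosed (ul L) := by
  induction L with
  | nil => simp
  | cons A t ih =>
    rw [ul_cons]
    exact (h A (by simp)).union (ih fun B hB => h B (List.mem_cons_of_mem _ hB))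

/-- Disjointify a list of sets. -/
def disjointify : List (Set X) → List (Set X)
  | [] => []
  | A :: t => A :: (disjointify t).map (· \ A)

lemma ul_map_diff (A : Set X) (L : List (Set X)) : ul (L.map (· \ A)) = ul L \ A := by
  induction L with
  | nil => simp
  | cons B t ih => simp [ih, Set.union_diff_distrib]

lemma ul_disjointify (L : List (Set X)) : ul (disjointify L) = ul L := by
  induction L with
  | nil => rfl
  | cons A t ih =>
    simp only [disjointify, ul_cons, ul_map_diff, ih]
    rw [Set.union_diff_self]

lemma disjointify_pairwise (L : List (Set X)) : (disjointify L).Pairwise Disjoint := by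
  induction L with
  | nil => simp [disjointify]
  | cons A t ih =>
    refine List.Pairwise.cons ?_ (ih.map _ fun B C h => h.mono diff_subset diff_subset)
    intro B hB
    rcases List.mem_map.mp hB with ⟨C, _, rfl⟩
    exact Set.disjoint_sdiff_right

lemma disjointify_mem {B : Set X} {L : List (Set X)} (hB : B ∈ disjointify L) :
    ∃ C ∈ L, B ⊆ C := by
  induction L generalizing B with
  | nil => simp [disjointify] at hB
  | cons A t ih =>
    rcases List.mem_cons.mp hB with rfl | hB
    · exact ⟨B, by simp, subset_rfl⟩
    · rcases List.mem_map.mp hB with ⟨C, hC, rfl⟩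
      rcases ih hC with ⟨D, hD, hCD⟩
      exact ⟨D, List.mem_cons_of_mem _ hD, diff_subset.trans hCD⟩

lemma disjointify_clopen [TopologicalSpace X] {L : List (Set X)}
    (h : ∀ B ∈ L, IsClopen B) : ∀ B ∈ disjointify L, IsClopen B := by
  induction L with
  | nil => simp [disjointify]
  | cons A t ih =>
    intro B hB
    rcases List.mem_cons.mp hB with rfl | hB
    · exact h B (by simp)
    · rcases List.mem_map.mp hB with ⟨C, hC, rfl⟩
      exact (ih (fun B hB => h B (List.mem_cons_of_mem _ hB)) C hC).diff
        (h A (by simp))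

variable [MetricSpace X] [CompactSpace X] [TotallyDisconnectedSpace X]

open Classical in
/-- Partition a nonempty clopen set into finitely many nonempty clopen sets of
small diameter. -/
lemma exists_partition (K : Set X) (hK : IsClopen K) (hne : K.Nonempty)
    {ε : ℝ≥0∞} (hε : 0 < ε) :
    ∃ P : List (Set X), P ≠ [] ∧
      (∀ B ∈ P, IsClopen B ∧ B.Nonempty ∧ EMetric.diam B ≤ ε) ∧
      P.Pairwise Disjoint ∧ ul P = K := by
  have hV : ∀ x : K, ∃ V : Set X, IsClopen V ∧ (x : X) ∈ V ∧
      V ⊆ EMetric.ball (x : X) (ε / 2) ∩ K := by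
    intro x
    exact compact_exists_isClopen_in_isOpen
      (EMetric.isOpen_ball.inter hK.2) ⟨EMetric.mem_ball_self (ENNReal.div_pos hε.ne' (by norm_num)), x.2⟩
  choose V hV1 hV2 hV3 using hV
  have hcov : K ⊆ ⋃ x : K, V x := fun y hy =>
    Set.mem_iUnion.mpr ⟨⟨y, hy⟩, hV2 ⟨y, hy⟩⟩
  obtain ⟨t, ht⟩ := (hK.1.isCompact).elim_finite_subcover V (fun x => (hV1 x).2) hcov
  -- list of covering clopen sets
  set L : List (Set X) := t.toList.map V with hL
  have hLprop : ∀ B ∈ L, IsClopen B ∧ B ⊆ K ∧ EMetric.diam B ≤ ε := by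
    intro B hB
    rcases List.mem_map.mp hB with ⟨x, _, rfl⟩
    refine ⟨hV1 x, (hV3 x).trans inter_subset_right, ?_⟩
    calc EMetric.diam (V x) ≤ EMetric.diam (EMetric.ball (x : X) (ε / 2)) :=
          EMetric.diam_mono ((hV3 x).trans inter_subset_left)
      _ ≤ 2 * (ε / 2) := EMetric.diam_ball
      _ ≤ ε := ENNReal.mul_div_le
  have hulL : ul L = K := by
    apply Set.Subset.antisymm
    · intro y hy
      rcases mem_ul.mp hy with ⟨B, hB, hyB⟩
      exact (hLprop B hB).2.1 hyB
    · intro y hy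
      rcases Set.mem_iUnion.mp (ht hy) with ⟨x, hx⟩
      rcases Set.mem_iUnion.mp hx with ⟨hxt, hyx⟩
      exact mem_ul.mpr ⟨V x, List.mem_map.mpr ⟨x, Finset.mem_toList.mpr hxt, rfl⟩, hyx⟩
  -- disjointify and drop the empty pieces
  have hflt : ul ((disjointify L).filter (fun B => decide B.Nonempty)) = K := by
    have h1 : ul ((disjointify L).filter (fun B => decide B.Nonempty)) = ul (disjointify L) := by
      apply Set.Subset.antisymm
      · intro y hy
        rcases mem_ul.mp hy with ⟨B, hB, hyB⟩
        exact mem_ul.mpr ⟨B, (List.mem_filter.mp hB).1, hyB⟩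
      · intro y hy
        rcases mem_ul.mp hy with ⟨B, hB, hyB⟩
        exact mem_ul.mpr ⟨B, List.mem_filter.mpr ⟨hB, decide_eq_true ⟨y, hyB⟩⟩, hyB⟩
    rw [h1, ul_disjointify, hulL]
  refine ⟨(disjointify L).filter (fun B => decide B.Nonempty), ?_, ?_, ?_, hflt⟩
  · intro h
    rw [h] at hflt
    simp only [ul_nil] at hflt
    exact hne.ne_empty hflt.symm
  · intro B hB
    have h1 := (List.mem_filter.mp hB).1
    have h2 : B.Nonempty := of_decide_eq_true (List.mem_filter.mp hB).2
    rcases disjointify_mem h1 with ⟨C, hC, hBC⟩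
    exact ⟨disjointify_clopen (fun B hB => (hLprop B hB).1) B h1, h2,
      le_trans (EMetric.diam_mono hBC) (hLprop C hC).2.2⟩
  · exact (disjointify_pairwise L).sublist List.filter_sublist

/-- Split a clopen set with at least two points into two nonempty clopen pieces. -/
lemma exists_split (K : Set X) (hK : IsClopen K)
    (h2 : ∃ x ∈ K, ∃ y ∈ K, x ≠ y) :
    ∃ U : Set X, IsClopen U ∧ U.Nonempty ∧ (K \ U).Nonempty ∧ U ⊆ K := by
  haveI : TotallySeparatedSpace X := loc_compact_t2_tot_disc_iff_tot_sep.mp ‹_›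
  obtain ⟨x, hx, y, hy, hxy⟩ := h2
  obtain ⟨W, hW, xW, yW⟩ := exists_isClopen_of_totally_separated hxy
  exact ⟨W ∩ K, hW.inter hK, ⟨x, xW, hx⟩, ⟨y, hy, fun h => yW h.1⟩,
    inter_subset_right⟩

/-- The "good list" predicate. -/
def good (L : List (Set X)) : Prop :=
  L ≠ [] ∧ (∀ B ∈ L, IsClopen B ∧ B.Nonempty) ∧ L.Pairwise Disjoint

lemma ul_nonempty {L : List (Set X)} (h : good L) : (ul L).Nonempty := by
  rcases L with _ | ⟨A, t⟩
  · exact absurd rfl h.1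
  · rcases (h.2.1 A (by simp)).2 with ⟨x, hx⟩
    exact ⟨x, by rw [ul_cons]; exact Or.inl hx⟩

lemma two_points_of_perfect (hperf : Perfect (Set.univ : Set X)) {K : Set X}
    (hK : IsOpen K) (hne : K.Nonempty) : ∃ x ∈ K, ∃ y ∈ K, x ≠ y := by
  obtain ⟨x, hx⟩ := hne
  have hacc := hperf.2 x (mem_univ x)
  rw [accPt_iff_nhds] at hacc
  obtain ⟨y, ⟨hy, -⟩, hyx⟩ := hacc K (hK.mem_nhds hx)
  exact ⟨y, hy, x, hx, hyx⟩

/-- One splitting step. -/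
lemma step (hperf : Perfect (Set.univ : Set X)) (L : List (Set X)) (n : ℕ) :
    ∃ L₀ L₁ : List (Set X), good L →
      good L₀ ∧ good L₁ ∧ ul L₀ ∪ ul L₁ = ul L ∧ Disjoint (ul L₀) (ul L₁) ∧
      (∀ B ∈ L₀ ++ L₁, EMetric.diam B ≤ (1 / 2 : ℝ≥0∞) ^ n ∨ B ∈ L) ∧
      (2 ≤ L.length → L₀.length < L.length ∧ L₁.length < L.length) ∧
      (L.length = 1 → ∀ B ∈ L₀ ++ L₁, EMetric.diam B ≤ (1 / 2 : ℝ≥0∞) ^ n) := by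
  by_cases hg : good L
  swap
  · exact ⟨[], [], fun h => absurd h hg⟩
  rcases L with _ | ⟨A, t⟩
  · exact absurd rfl hg.1
  rcases t with _ | ⟨B, t⟩
  · -- singleton case: split into two pieces, partition each finely
    obtain ⟨hAclopen, hAne⟩ := hg.2.1 A (by simp)
    have hε : (0 : ℝ≥0∞) < (1 / 2 : ℝ≥0∞) ^ n :=
      ENNReal.pow_pos (by norm_num) n
    obtain ⟨U, hU, hUne, hAUne, hUA⟩ :=
      exists_split A hAclopen (two_points_of_perfect hperf hAclopen.2 hAne)
    obtain ⟨P₀, hP₀ne, hP₀, hP₀pw, hP₀u⟩ := exists_partition U hU hUne hε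
    obtain ⟨P₁, hP₁ne, hP₁, hP₁pw, hP₁u⟩ :=
      exists_partition (A \ U) (hAclopen.diff hU) hAUne hε
    refine ⟨P₀, P₁, fun _ => ⟨⟨hP₀ne, fun B hB => ⟨(hP₀ B hB).1, (hP₀ B hB).2.1⟩, hP₀pw⟩,
      ⟨hP₁ne, fun B hB => ⟨(hP₁ B hB).1, (hP₁ B hB).2.1⟩, hP₁pw⟩, ?_, ?_, ?_, ?_, ?_⟩⟩
    · rw [hP₀u, hP₁u]
      simp [Set.union_diff_cancel hUA]
    · rw [hP₀u, hP₁u]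
      exact Set.disjoint_sdiff_right
    · intro B hB
      rcases List.mem_append.mp hB with hB | hB
      · exact Or.inl (hP₀ B hB).2.2
      · exact Or.inl (hP₁ B hB).2.2
    · intro h; simp at h
    · intro _ B hB
      rcases List.mem_append.mp hB with hB | hB
      · exact (hP₀ B hB).2.2
      · exact (hP₁ B hB).2.2
  · -- length ≥ 2: split off the head
    refine ⟨[A], B :: t, fun _ => ⟨⟨by simp, fun C hC => by
        simp only [List.mem_singleton] at hC
        exact hC ▸ hg.2.1 A (by simp), by simp⟩,
      ⟨by simp, fun C hC => hg.2.1 C (List.mem_cons_of_mem _ hC),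
        (List.pairwise_cons.mp hg.2.2).2⟩, ?_, ?_, ?_, ?_, ?_⟩⟩
    · simp
    · have hA : ul [A] = A := by simp
      rw [hA]
      exact disjoint_ul (List.pairwise_cons.mp hg.2.2).1
    · intro C hC
      exact Or.inr (by simpa using hC)
    · intro _
      constructor <;> simp
    · intro h; simp at h

/-- Main construction, over a metric space. -/
lemma main (hperf : Perfect (Set.univ : Set X)) [Nonempty X] :
    Nonempty (X ≃ₜ (ℕ → Bool)) := by
  classical
  choose c0 c1 hc using step (X := X) hperf
  -- the scheme of lists
  let Lf : List Bool → List (Set X) := fun l =>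
    l.rec [Set.univ] (fun a l ih => if a then c1 ih l.length else c0 ih l.length)
  have hLf0 : Lf [] = [Set.univ] := rfl
  have hLfc : ∀ (a : Bool) (l : List Bool),
      Lf (a :: l) = if a then c1 (Lf l) l.length else c0 (Lf l) l.length := fun a l => rfl
  have hgood : ∀ l, good (Lf l) := by
    intro l
    induction l with
    | nil =>
      exact ⟨by simp [hLf0], fun B hB => by
        simp only [hLf0, List.mem_singleton] at hB
        exact hB ▸ ⟨isClopen_univ, univ_nonempty⟩, by simp [hLf0]⟩
    | cons a l ih =>
      have H := hc (Lf l) l.length ih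
      rw [hLfc]
      cases a
      · simpa using H.1
      · simpa using H.2.1
  -- the scheme of sets
  set D : List Bool → Set X := fun l => ul (Lf l) with hD
  have hcov : ∀ l, D (false :: l) ∪ D (true :: l) = D l := by
    intro l
    have H := hc (Lf l) l.length (hgood l)
    simpa [hD, hLfc] using H.2.2.1
  have hdisj : ∀ l, Disjoint (D (false :: l)) (D (true :: l)) := by
    intro l
    have H := hc (Lf l) l.length (hgood l)
    simpa [hD, hLfc] using H.2.2.2.1
  have hanti : CantorScheme.Antitone D := by
    intro l a
    cases a
    · exact (hcov l) ▸ Set.subset_union_left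
    · exact (hcov l) ▸ Set.subset_union_right
  have hclosed : ∀ l, IsClosed (D l) :=
    fun l => isClosed_ul fun B hB => ((hgood l).2.1 B hB).1.1
  have hne : ∀ l, (D l).Nonempty := fun l => ul_nonempty (hgood l)
  have hdisj' : CantorScheme.Disjoint D := by
    rintro l (_ | _) (_ | _) hab <;> try exact absurd rfl hab
    · exact hdisj l
    · exact (hdisj l).symm
  -- monotonicity along branches
  have hmono : ∀ (x : ℕ → Bool) (m n : ℕ), m ≤ n → D (res x n) ⊆ D (res x m) := by
    intro x m n hmn
    induction n with
    | zero => rw [Nat.le_zero.mp hmn]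
    | succ n ih =>
      rcases Nat.lt_or_ge m (n + 1) with h | h
      · exact (res_succ x n ▸ hanti (res x n) (x n)).trans (ih (Nat.lt_succ_iff.mp h))
      · rw [Nat.le_antisymm hmn h]
  -- lengths
  have hlen_pos : ∀ l, 1 ≤ (Lf l).length :=
    fun l => List.length_pos_iff.mpr (hgood l).1
  have hlen_lt : ∀ (l : List Bool) (a : Bool), 2 ≤ (Lf l).length →
      (Lf (a :: l)).length < (Lf l).length := by
    intro l a h2
    have H := (hc (Lf l) l.length (hgood l)).2.2.2.2.2.1 h2
    rw [hLfc]
    cases a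
    · simpa using H.1
    · simpa using H.2
  -- claim 1: singleton lists occur unboundedly along each branch
  have claim1 : ∀ (x : ℕ → Bool) (n : ℕ), ∃ n' ≥ n, (Lf (res x n')).length = 1 := by
    intro x n
    have key : ∀ (k n : ℕ), (Lf (res x n)).length ≤ k →
        ∃ n' ≥ n, (Lf (res x n')).length = 1 := by
      intro k
      induction k with
      | zero => intro n hn; exact absurd (le_trans (hlen_pos _) hn) (by simp)
      | succ k ih =>
        intro n hn
        rcases Nat.lt_or_ge (Lf (res x n)).length 2 with h | h
        · exact ⟨n, le_refl _, Nat.le_antisymm (Nat.lt_succ_iff.mp h) (hlen_pos _)⟩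
        · have hlt : (Lf (res x (n + 1))).length < (Lf (res x n)).length := by
            rw [res_succ]
            exact hlen_lt (res x n) (x n) h
          obtain ⟨n', hn', h1⟩ := ih (n + 1) (by omega)
          exact ⟨n', by omega, h1⟩
    exact key (Lf (res x n)).length n (le_refl _)
  -- claim 2: after a singleton at time n, all pieces have diameter ≤ (1/2)^n
  have claim2 : ∀ (x : ℕ → Bool) (n : ℕ), (Lf (res x n)).length = 1 →
      ∀ m, ∀ B ∈ Lf (res x (n + 1 + m)), EMetric.diam B ≤ (1 / 2 : ℝ≥0∞) ^ n := by
    intro x n h1 m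
    induction m with
    | zero =>
      have H := (hc (Lf (res x n)) (res x n).length (hgood _)).2.2.2.2.2.2 h1
      intro B hB
      have hmem : B ∈ c0 (Lf (res x n)) (res x n).length ++
          c1 (Lf (res x n)) (res x n).length := by
        cases hxn : x n with
        | false =>
          rw [show n + 1 + 0 = n + 1 from rfl, res_succ, hLfc, hxn] at hB
          simp only [Bool.false_eq_true, if_false] at hB
          exact List.mem_append.mpr (Or.inl hB)
        | true =>
          rw [show n + 1 + 0 = n + 1 from rfl, res_succ, hLfc, hxn] at hB
          simp only [if_true] at hB
          exact List.mem_append.mpr (Or.inr hB)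
      have hd := H B hmem
      rwa [res_length] at hd
    | succ m ih =>
      intro B hB
      rw [show n + 1 + (m + 1) = (n + 1 + m) + 1 by omega, res_succ] at hB
      have H := (hc (Lf (res x (n + 1 + m))) (res x (n + 1 + m)).length
        (hgood _)).2.2.2.2.1 B
      have hBor : EMetric.diam B ≤ (1 / 2 : ℝ≥0∞) ^ (res x (n + 1 + m)).length ∨
          B ∈ Lf (res x (n + 1 + m)) := by
        apply H
        cases hxn : x (n + 1 + m) with
        | false =>
          rw [hLfc, hxn] at hB
          simp only [Bool.false_eq_true, if_false] at hB
          exact List.mem_append.mpr (Or.inl hB)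
        | true =>
          rw [hLfc, hxn] at hB
          simp only [if_true] at hB
          exact List.mem_append.mpr (Or.inr hB)
      rcases hBor with h | h
      · refine le_trans h ?_
        rw [res_length]
        exact pow_le_pow_of_le_one zero_le (by norm_num) (by omega)
      · exact ih B h
  -- vanishing diameter
  have hdiam : VanishingDiam D := by
    intro x
    rw [ENNReal.tendsto_atTop_zero]
    intro ε hε
    obtain ⟨m, hm⟩ : ∃ m : ℕ, (1 / 2 : ℝ≥0∞) ^ m < ε := by
      have h := ENNReal.tendsto_pow_atTop_nhds_zero_of_lt_one
        (by norm_num : (1 / 2 : ℝ≥0∞) < 1)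
      exact (h.eventually (gt_mem_nhds hε)).exists
    obtain ⟨n, hn, h1⟩ := claim1 x m
    obtain ⟨n', hn', h1'⟩ := claim1 x (n + 1)
    refine ⟨n', fun k hk => ?_⟩
    have hsub : D (res x k) ⊆ D (res x n') := hmono x n' k hk
    obtain ⟨B, hB⟩ := List.length_eq_one_iff.mp h1'
    have hDB : D (res x n') = B := by show ul (Lf (res x n')) = B; rw [hB]; simp
    have hdB : EMetric.diam B ≤ (1 / 2 : ℝ≥0∞) ^ n := by
      apply claim2 x n h1 (n' - (n + 1))
      rw [show n + 1 + (n' - (n + 1)) = n' by omega, hB]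
      simp
    calc EMetric.diam (D (res x k)) ≤ EMetric.diam (D (res x n')) := EMetric.diam_mono hsub
      _ = EMetric.diam B := by rw [hDB]
      _ ≤ (1 / 2 : ℝ≥0∞) ^ n := hdB
      _ ≤ (1 / 2 : ℝ≥0∞) ^ m := pow_le_pow_of_le_one zero_le (by norm_num) hn
      _ ≤ ε := hm.le
  -- the induced map is total
  have hanti' : ClosureAntitone D := hanti.closureAntitone fun l => hclosed l
  have hdom : ∀ x : ℕ → Bool, x ∈ (inducedMap D).1 := by
    intro x
    rw [hanti'.map_of_vanishingDiam hdiam hne]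
    exact mem_univ _
  set f : (ℕ → Bool) → X := fun x => (inducedMap D).2 ⟨x, hdom x⟩ with hf
  have hcont : Continuous f :=
    hdiam.map_continuous.comp (Continuous.subtype_mk continuous_id _)
  have hinj : Injective f := by
    intro x y hxy
    simpa only [← Subtype.val_inj] using hdisj'.map_injective hxy
  have hsurj : Surjective f := by
    intro y
    -- construct the branch of y
    let b : ℕ → List Bool := fun n =>
      Nat.rec [] (fun _ l => (if y ∈ D (true :: l) then true else false) :: l) n
    set x : ℕ → Bool := fun n => if y ∈ D (true :: b n) then true else false with hx
    have hbx : ∀ n, res x n = b n := by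
      intro n
      induction n with
      | zero => rfl
      | succ n ih => rw [res_succ, ih]
    have hyD : ∀ n, y ∈ D (res x n) := by
      intro n
      induction n with
      | zero => show y ∈ ul (Lf (res x 0)); rw [res_zero, hLf0]; simp
      | succ n ih =>
        rw [res_succ, hbx]
        rw [hbx] at ih
        by_cases hy : y ∈ D (true :: b n)
        · have : x n = true := by rw [hx]; simp [hy]
          rw [this]; exact hy
        · have : x n = false := by rw [hx]; simp [hy]
          rw [this]
          rcases (hcov (b n) ▸ ih : y ∈ D (false :: b n) ∪ D (true :: b n)) with h | h
          · exact h
          · exact absurd h hy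
    refine ⟨x, ?_⟩
    have hmem : ∀ n, f x ∈ D (res x n) := fun n => map_mem ⟨x, hdom x⟩ n
    have hdist : edist (f x) y = 0 := by
      refine le_antisymm ?_ zero_le
      refine ge_of_tendsto' (hdiam x) fun n => ?_
      exact EMetric.edist_le_diam_of_mem (hmem n) (hyD n)
    exact edist_eq_zero.mp hdist
  exact ⟨(Continuous.homeoOfEquivCompactToT2
    (f := Equiv.ofBijective f ⟨hinj, hsurj⟩) hcont).symm⟩

end Stmt2Aux

/-- Every nonempty totally disconnected, perfect, compact, metrizable space is
homeomorphic to the Cantor set (realized as `ℕ → Bool`). -/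
theorem stmt_2 {X : Type*} [TopologicalSpace X] [TopologicalSpace.MetrizableSpace X]
    [CompactSpace X] [TotallyDisconnectedSpace X] [Nonempty X]
    (hperf : Perfect (Set.univ : Set X)) :
    Nonempty (X ≃ₜ (ℕ → Bool)) := by
  letI : MetricSpace X := TopologicalSpace.metrizableSpaceMetric X
  exact Stmt2Aux.main hperf
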